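/- Mixed associativity of Wiener-Fliess composition and multiplicative mixed composition: for d ∈ ℝ^p[[X̃]] with |X̃| = q, c ∈ ℝ^q⟨⟨X⟩⟩ proper, and e ∈ ℝ^m⟨⟨X⟩⟩, one has d ∘̂ (c ∘̄ δ_e) = (d ∘̂ c) ∘̄ δ_e. -/

import Mathlib

open scoped BigOperators

namespace FPS

/-- A (noncommutative) formal power series over alphabet `X` is a map from words to `ℝ`. -/
abbrev Series (X : Type*) := List X → ℝ

noncomputable section

variable {X : Type*} [DecidableEq X]

/-- The series `1·∅`. -/
def one : Series X := fun η => if η = [] then 1 else 0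

/-- Cauchy (concatenation) product. -/
def cauchy (c d : Series X) : Series X := fun η =>
  ∑ i ∈ Finset.range (η.length + 1), c (η.take i) * d (η.drop i)

/-- Shuffle product. -/
def sh (c d : Series X) : List X → ℝ
  | [] => c [] * d []
  | x :: t => sh (fun w => c (x :: w)) d t + sh c (fun w => d (x :: w)) t

/-- Cauchy powers. -/
def cpow (c : Series X) : ℕ → Series X
  | 0 => one
  | k + 1 => cauchy c (cpow c k)

/-- Shuffle powers. -/
def shpow (c : Series X) : ℕ → Series X
  | 0 => one
  | k + 1 => sh c (shpow c k)

/-- The proper series `1 - s/(s,∅)` entering the inverse formulas (negated proper part of `s/(s,∅)`). -/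
def sprime (s : Series X) : Series X := fun w => if w = [] then 0 else - (s w / s [])

/-- Cauchy inverse `(s,∅)⁻¹ Σ_k (s')^k` of a purely improper series. -/
def cInv (s : Series X) : Series X := fun η =>
  (s [])⁻¹ * ∑ k ∈ Finset.range (η.length + 1), cpow (sprime s) k η

/-- Shuffle inverse `(s,∅)⁻¹ Σ_k (s')^{⧢k}` of a purely improper series. -/
def shInv (s : Series X) : Series X := fun η =>
  (s [])⁻¹ * ∑ k ∈ Finset.range (η.length + 1), shpow (sprime s) k η

/-- The order: minimal length of a word in the support (`⊤` for the zero series). -/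
def ord (c : Series X) : ℕ∞ := sInf ((fun η : List X => (η.length : ℕ∞)) '' {η | c η ≠ 0})

/-- `σ^n` with `σ^⊤ = 0`. -/
def powE (σ : ℝ) : ℕ∞ → ℝ := fun n => if n = ⊤ then 0 else σ ^ n.toNat

/-- The ultrametric `κ(c,d) = σ^{ord(c-d)}`. -/
def kappa (σ : ℝ) (c d : Series X) : ℝ := powE σ (ord (c - d))

/-- Order of a vector of series (minimum over components). -/
def ordV {n : ℕ} (c : Fin n → Series X) : ℕ∞ := ⨅ i, ord (c i)

/-- Ultrametric on vectors of series. -/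
def kappaV (σ : ℝ) {n : ℕ} (c d : Fin n → Series X) : ℝ := powE σ (ordV (c - d))

/-- Proper part `c - (c,∅)∅`. -/
def properPart (c : Series X) : Series X := fun w => if w = [] then 0 else c w

/-- Left concatenation by a letter: `x·s`. -/
def leftc (x : X) (s : Series X) : Series X := fun η =>
  match η with
  | [] => 0
  | y :: t => if y = x then s t else 0

end

noncomputable section

/-- `φ̄_d(η)` : the algebra homomorphism defining the multiplicative mixed composition
product, with `φ̄_d(x_0)(w) = x_0 w` and `φ̄_d(x_i)(w) = x_i (d_i ⧢ w)`. -/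
def phiWord {m : ℕ} (d : Fin m → Series (Fin (m + 1))) :
    List (Fin (m + 1)) → Series (Fin (m + 1)) → Series (Fin (m + 1))
  | [], w => w
  | i :: t, w =>
      Fin.cases (leftc 0 (phiWord d t w)) (fun j => leftc j.succ (sh (d j) (phiWord d t w))) i

/-- Multiplicative mixed composition product `c ∘̄ δ_d = Σ_η (c,η) φ̄_d(η)(1)`. -/
def mix {m : ℕ} (c : Series (Fin (m + 1))) (d : Fin m → Series (Fin (m + 1))) :
    Series (Fin (m + 1)) := fun η =>
  ∑ k ∈ Finset.range (η.length + 1),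
    ∑ v : List.Vector (Fin (m + 1)) k, c v.toList * phiWord d v.toList one η

/-- `ψ_e(η)` : the algebra homomorphism defining the composition product, with
`ψ_e(x'_i)(w) = x_0 (e_i ⧢ w)`, `e_0 = 1∅`. -/
def psiWord {ℓ m : ℕ} (e : Fin ℓ → Series (Fin (m + 1))) :
    List (Fin (ℓ + 1)) → Series (Fin (m + 1)) → Series (Fin (m + 1))
  | [], w => w
  | i :: t, w => leftc 0 (sh (Fin.cases one e i) (psiWord e t w))

/-- Composition product `c ∘ e = Σ_η (c,η) ψ_e(η)(1)`. -/
def comp {ℓ m : ℕ} (c : Series (Fin (ℓ + 1))) (e : Fin ℓ → Series (Fin (m + 1))) :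
    Series (Fin (m + 1)) := fun η =>
  ∑ k ∈ Finset.range (η.length + 1),
    ∑ v : List.Vector (Fin (ℓ + 1)) k, c v.toList * psiWord e v.toList one η

/-- The multiplicative composition product on `δ`-series:
`δ_c ∘ δ_d = δ_{d ⧢ (c ∘̄ δ_d)}`, expressed on the underlying series. -/
def star {m : ℕ} (c d : Fin m → Series (Fin (m + 1))) : Fin m → Series (Fin (m + 1)) :=
  fun i => sh (d i) (mix (c i) d)

/-- The all-ones series vector (generating series of the identity `δ_1`). -/
def oneV {X : Type*} [DecidableEq X] (m : ℕ) : Fin m → Series X := fun _ => one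

open Classical in
/-- The inverse `d^{∘-1}` in the multiplicative dynamic output feedback group: the unique
solution of `e = d^{⧢-1} ∘̄ δ_e`. -/
def dynInv {m : ℕ} (d : Fin m → Series (Fin (m + 1))) : Fin m → Series (Fin (m + 1)) :=
  if h : ∃ e : Fin m → Series (Fin (m + 1)), e = fun i => mix (shInv (d i)) e then h.choose
  else oneV m

/-- Shuffle power of a family: `c^{⧢n} = c_1^{⧢n_1} ⧢ ⋯ ⧢ c_ℓ^{⧢n_ℓ}`. -/
def shFam {X : Type*} [DecidableEq X] {ℓ : ℕ} (c : Fin ℓ → Series X) (n : Fin ℓ →₀ ℕ) :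
    Series X :=
  (List.finRange ℓ).foldr (fun i acc => sh (shpow (c i) (n i)) acc) one

/-- Wiener-Fliess composition product `d ∘̂ c = Σ_{η∈X̃*} (d,η) c^{⧢η}` of a commutative
series `d` with a (proper) noncommutative series vector `c`. -/
def wf {X : Type*} [DecidableEq X] {ℓ : ℕ} (d : MvPowerSeries (Fin ℓ) ℝ)
    (c : Fin ℓ → Series X) : Series X := fun η =>
  ∑ n ∈ Finset.Iic (Finsupp.equivFunOnFinite.symm fun _ : Fin ℓ => η.length),
    MvPowerSeries.coeff n d * shFam c n η

end

set_option linter.unusedSectionVars false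

noncomputable section AuxLemmas

section GenX
variable {X : Type*} [DecidableEq X]

-- AUX
def shift (x : X) (s : Series X) : Series X := fun w => s (x :: w)

lemma sh_nil (a b : Series X) : sh a b [] = a [] * b [] := rfl

lemma sh_cons (a b : Series X) (x : X) (t : List X) :
    sh a b (x :: t) = sh (shift x a) b t + sh a (shift x b) t := rfl

lemma sh_comm : ∀ (η : List X) (a b : Series X), sh a b η = sh b a η
  | [], a, b => mul_comm _ _
  | x :: t, a, b => by
      rw [sh_cons, sh_cons, sh_comm t (shift x a) b, sh_comm t a (shift x b), add_comm]

lemma sh_add_left : ∀ (η : List X) (a a' b : Series X),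
    sh (fun w => a w + a' w) b η = sh a b η + sh a' b η
  | [], a, a', b => add_mul _ _ _
  | x :: t, a, a', b => by
      rw [sh_cons, sh_cons, sh_cons]
      rw [show shift x (fun w => a w + a' w) = fun w => shift x a w + shift x a' w from rfl]
      rw [sh_add_left t, sh_add_left t]
      ring

lemma sh_zero_left : ∀ (η : List X) (b : Series X), sh (fun _ => (0:ℝ)) b η = 0
  | [], _ => zero_mul _
  | x :: t, b => by
      rw [sh_cons]
      rw [show shift x (fun _ : List X => (0:ℝ)) = fun _ => (0:ℝ) from rfl]
      rw [sh_zero_left t, sh_zero_left t, add_zero]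

lemma sh_smul_left : ∀ (η : List X) (r : ℝ) (a b : Series X),
    sh (fun w => r * a w) b η = r * sh a b η
  | [], r, a, b => by rw [sh_nil, sh_nil]; ring
  | x :: t, r, a, b => by
      rw [sh_cons, sh_cons]
      rw [show shift x (fun w => r * a w) = fun w => r * shift x a w from rfl]
      rw [sh_smul_left t, sh_smul_left t]
      ring

lemma sh_one_left : ∀ (η : List X) (b : Series X), sh one b η = b η
  | [], b => by rw [sh_nil]; simp [one]
  | x :: t, b => by
      rw [sh_cons]
      rw [show shift x (one : Series X) = fun _ => (0:ℝ) from funext fun w => by simp [shift, one]]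
      rw [sh_zero_left t, sh_one_left t, zero_add]
      rfl

lemma sh_add_right (η : List X) (a b b' : Series X) :
    sh a (fun w => b w + b' w) η = sh a b η + sh a b' η := by
  rw [sh_comm η, sh_add_left η, sh_comm η b a, sh_comm η b' a]

lemma sh_smul_right (η : List X) (r : ℝ) (a b : Series X) :
    sh a (fun w => r * b w) η = r * sh a b η := by
  rw [sh_comm η, sh_smul_left η, sh_comm η b a]

lemma sh_zero_right (η : List X) (a : Series X) : sh a (fun _ => (0:ℝ)) η = 0 := by
  rw [sh_comm η, sh_zero_left η]

lemma sh_sum_right {ι : Type*} [DecidableEq ι] (s : Finset ι) (a : Series X) (f : ι → Series X)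
    (η : List X) : sh a (fun w => ∑ i ∈ s, f i w) η = ∑ i ∈ s, sh a (f i) η := by
  induction s using Finset.induction_on with
  | empty => simpa using sh_zero_right η a
  | @insert j s hj ih =>
      rw [show (fun w => ∑ i ∈ insert j s, f i w) = fun w => f j w + ∑ i ∈ s, f i w from
        funext fun w => Finset.sum_insert hj]
      rw [sh_add_right, ih, Finset.sum_insert hj]

lemma sh_assoc : ∀ (η : List X) (a b c : Series X), sh (sh a b) c η = sh a (sh b c) η
  | [], a, b, c => mul_assoc _ _ _
  | x :: t, a, b, c => by
      rw [sh_cons, sh_cons]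
      rw [show shift x (sh a b) = fun w => sh (shift x a) b w + sh a (shift x b) w from
        funext fun w => sh_cons a b x w]
      rw [show shift x (sh b c) = fun w => sh (shift x b) c w + sh b (shift x c) w from
        funext fun w => sh_cons b c x w]
      rw [sh_add_left, sh_add_right]
      rw [sh_assoc t (shift x a) b c, sh_assoc t a (shift x b) c, sh_assoc t a b (shift x c), add_assoc]

lemma sh_congr_len : ∀ (η : List X) (a a' b b' : Series X),
    (∀ w : List X, w.length ≤ η.length → a w = a' w) →
    (∀ w : List X, w.length ≤ η.length → b w = b' w) →
    sh a b η = sh a' b' η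
  | [], a, a', b, b', ha, hb => by
      rw [sh_nil, sh_nil, ha [] (by simp), hb [] (by simp)]
  | x :: t, a, a', b, b', ha, hb => by
      rw [sh_cons, sh_cons]
      rw [sh_congr_len t (shift x a) (shift x a') b b'
        (fun w hw => ha (x :: w) (by simpa using Nat.succ_le_succ hw))
        (fun w hw => hb w (by simp; omega))]
      rw [sh_congr_len t a a' (shift x b) (shift x b')
        (fun w hw => ha w (by simp; omega))
        (fun w hw => hb (x :: w) (by simpa using Nat.succ_le_succ hw))]

lemma sh_van : ∀ (η : List X) (p q : ℕ) (a b : Series X),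
    (∀ w : List X, w.length < p → a w = 0) →
    (∀ w : List X, w.length < q → b w = 0) →
    η.length < p + q → sh a b η = 0
  | [], p, q, a, b, ha, hb, h => by
      rw [sh_nil]
      rcases Nat.lt_or_ge 0 p with hp | hp
      · rw [ha [] (by simpa using hp), zero_mul]
      · rw [hb [] (by simp at h ⊢; omega), mul_zero]
  | x :: t, p, q, a, b, ha, hb, h => by
      rw [sh_cons]
      rw [sh_van t (p-1) q (shift x a) b
        (fun w hw => ha (x :: w) (by simp; omega)) hb (by simp at h ⊢; omega)]
      rw [sh_van t p (q-1) a (shift x b) ha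
        (fun w hw => hb (x :: w) (by simp; omega)) (by simp at h ⊢; omega)]
      rw [add_zero]

lemma shpow_van (a : Series X) (ha : a [] = 0) :
    ∀ (k : ℕ) (w : List X), w.length < k → shpow a k w = 0
  | 0, w, hw => absurd hw (by omega)
  | k+1, w, hw => by
      show sh a (shpow a k) w = 0
      refine sh_van w 1 k a _ (fun u hu => ?_) (shpow_van a ha k) (by omega)
      cases u with
      | nil => exact ha
      | cons x t => simp at hu



end GenX

section MixLemmas

variable {m : ℕ} (e : Fin m → Series (Fin (m + 1)))

-- AUX2
variable {m : ℕ} (e : Fin m → Series (Fin (m + 1)))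

def EE : Fin (m + 1) → Series (Fin (m + 1)) := fun i => Fin.cases one e i

lemma phi_cons (i : Fin (m + 1)) (v : List (Fin (m + 1))) :
    phiWord e (i :: v) one = leftc i (sh (EE e i) (phiWord e v one)) := by
  cases i using Fin.cases with
  | zero =>
      rw [show EE e (0 : Fin (m+1)) = one from by simp [EE]]
      rw [show phiWord e ((0 : Fin (m+1)) :: v) one = leftc 0 (phiWord e v one) from by
        simp [phiWord]]
      exact congrArg (leftc 0) (funext fun w => (sh_one_left w (phiWord e v one)).symm)
  | succ j => simp [phiWord, EE]

lemma phi_cons_eval (i : Fin (m+1)) (v : List (Fin (m+1))) (z : Fin (m+1)) (t : List (Fin (m+1))) :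
    phiWord e (i :: v) one (z :: t) =
      if z = i then sh (EE e i) (phiWord e v one) t else 0 := by
  rw [phi_cons]; rfl

lemma phi_nil_eval (i : Fin (m+1)) (v : List (Fin (m+1))) :
    phiWord e (i :: v) one [] = 0 := by
  rw [phi_cons]; rfl

lemma phi_vanish : ∀ (v η : List (Fin (m + 1))), η.length < v.length →
    phiWord e v one η = 0
  | i :: v, [], _ => phi_nil_eval e i v
  | i :: v, z :: t, h => by
      rw [phi_cons_eval]
      split
      · exact sh_van t 0 v.length _ _ (fun w hw => absurd hw (by omega))
          (fun w hw => phi_vanish v w hw) (by simp at h ⊢; omega)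
      · rfl

lemma mix_eval (c : Series (Fin (m+1))) (N : ℕ) (η : List (Fin (m+1))) (hη : η.length < N) :
    mix c e η = ∑ k ∈ Finset.range N, ∑ v : List.Vector (Fin (m + 1)) k,
      c v.toList * phiWord e v.toList one η := by
  refine Finset.sum_subset (Finset.range_subset_range.mpr hη) ?_
  intro k hk hk'
  refine Finset.sum_eq_zero fun v _ => ?_
  rw [phi_vanish e v.toList η (by rw [v.toList_length]; simp at hk hk'; omega), mul_zero]

lemma mix_nil (c : Series (Fin (m+1))) : mix c e [] = c [] := by
  show (∑ k ∈ Finset.range 1, ∑ v : List.Vector (Fin (m + 1)) k,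
      c v.toList * phiWord e v.toList one []) = c []
  rw [Finset.sum_range_one]
  have h1 : ∀ v : List.Vector (Fin (m+1)) 0,
      c v.toList * phiWord e v.toList one [] = c [] := by
    intro v
    rw [List.eq_nil_of_length_eq_zero v.toList_length]
    show c [] * one [] = c []
    simp [one]
  rw [Finset.sum_congr rfl (fun v _ => h1 v), Finset.sum_const, Finset.card_univ,
    Fintype.card_eq_one_iff.mpr ⟨List.Vector.nil, fun v => v.eq_nil⟩, one_smul]

def vecConsEquiv (α : Type*) (k : ℕ) : α × List.Vector α k ≃ List.Vector α (k + 1) where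
  toFun p := p.1 ::ᵥ p.2
  invFun v := (v.head, v.tail)
  left_inv p := by cases p; simp
  right_inv v := by simp

lemma vec_sum_succ {α : Type*} [Fintype α] {β : Type*} [AddCommMonoid β] (k : ℕ)
    (f : List.Vector α (k + 1) → β) :
    (∑ v : List.Vector α (k + 1), f v) = ∑ x : α, ∑ v : List.Vector α k, f (x ::ᵥ v) := by
  calc (∑ v : List.Vector α (k + 1), f v)
      = ∑ p : α × List.Vector α k, f (p.1 ::ᵥ p.2) :=
        Fintype.sum_equiv (vecConsEquiv α k).symm _ _
          (fun v => by simp [vecConsEquiv])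
    _ = ∑ x : α, ∑ v : List.Vector α k, f (x ::ᵥ v) := Fintype.sum_prod_type _

lemma mix_shift (c : Series (Fin (m+1))) (z : Fin (m+1)) (t : List (Fin (m+1))) :
    mix c e (z :: t) = sh (EE e z) (mix (shift z c) e) t := by
  have hL : mix c e (z :: t) = ∑ k ∈ Finset.range (t.length + 1),
      ∑ v : List.Vector (Fin (m + 1)) k,
        shift z c v.toList * sh (EE e z) (phiWord e v.toList one) t := by
    rw [mix_eval e c (t.length + 2) (z :: t) (by simp)]
    rw [Finset.sum_range_succ']
    have h0 : (∑ v : List.Vector (Fin (m+1)) 0,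
        c v.toList * phiWord e v.toList one (z :: t)) = 0 := by
      refine Finset.sum_eq_zero fun v _ => ?_
      rw [List.eq_nil_of_length_eq_zero v.toList_length]
      show c [] * one (z :: t) = 0
      simp [one]
    rw [h0, add_zero]
    refine Finset.sum_congr rfl fun k _ => ?_
    rw [vec_sum_succ]
    have h1 : ∀ x : Fin (m+1), ∀ v : List.Vector (Fin (m+1)) k,
        c ((x ::ᵥ v).toList) * phiWord e ((x ::ᵥ v).toList) one (z :: t)
        = if z = x then shift z c v.toList * sh (EE e z) (phiWord e v.toList one) t else 0 := by
      intro x v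
      rw [List.Vector.toList_cons, phi_cons_eval]
      by_cases h : z = x
      · subst h; simp [shift]
      · simp [h]
    rw [Finset.sum_congr rfl (fun x _ => Finset.sum_congr rfl (fun v _ => h1 x v))]
    rw [Finset.sum_congr rfl (fun x (_ : x ∈ Finset.univ) => Finset.sum_ite_irrel _ _ _ _)]
    simp
  rw [hL]
  have hG : sh (EE e z) (mix (shift z c) e) t
      = sh (EE e z) (fun w => ∑ k ∈ Finset.range (t.length + 1),
          ∑ v : List.Vector (Fin (m + 1)) k,
            shift z c v.toList * phiWord e v.toList one w) t := by
    refine sh_congr_len t _ _ _ _ (fun w _ => rfl) (fun w hw => ?_)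
    rw [mix_eval e _ (t.length + 1) w (by omega)]
  rw [hG, sh_sum_right]
  refine (Finset.sum_congr rfl fun k _ => ?_).symm
  rw [sh_sum_right]
  exact Finset.sum_congr rfl fun v _ => sh_smul_right t _ _ _


lemma mix_add (a b : Series (Fin (m+1))) :
    mix (fun w => a w + b w) e = fun η => mix a e η + mix b e η := by
  funext η
  show (∑ k ∈ Finset.range (η.length + 1), ∑ v : List.Vector (Fin (m + 1)) k,
      (a v.toList + b v.toList) * phiWord e v.toList one η) = _
  simp [add_mul, Finset.sum_add_distrib, mix]

lemma mix_sh_aux : ∀ (n : ℕ) (η : List (Fin (m+1))), η.length ≤ n →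
    ∀ (a b : Series (Fin (m+1))),
      mix (sh a b) e η = sh (mix a e) (mix b e) η := by
  intro n
  induction n with
  | zero =>
      intro η hη a b
      rw [List.eq_nil_of_length_eq_zero (Nat.le_zero.mp hη)]
      rw [mix_nil, sh_nil, sh_nil, mix_nil, mix_nil]
  | succ n IH =>
      intro η hη a b
      match η with
      | [] => rw [mix_nil, sh_nil, sh_nil, mix_nil, mix_nil]
      | z :: t =>
        have ht : t.length ≤ n := by simp at hη; omega
        rw [mix_shift, sh_cons]
        rw [show shift z (sh a b) = fun w => sh (shift z a) b w + sh a (shift z b) w from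
          funext fun w => sh_cons a b z w]
        rw [mix_add, sh_add_right]
        have h1 : sh (EE e z) (mix (sh (shift z a) b) e) t
            = sh (EE e z) (sh (mix (shift z a) e) (mix b e)) t :=
          sh_congr_len t _ _ _ _ (fun w _ => rfl)
            (fun w hw => IH w (le_trans hw ht) (shift z a) b)
        have h2 : sh (EE e z) (mix (sh a (shift z b)) e) t
            = sh (EE e z) (sh (mix a e) (mix (shift z b) e)) t :=
          sh_congr_len t _ _ _ _ (fun w _ => rfl)
            (fun w hw => IH w (le_trans hw ht) a (shift z b))
        rw [h1, h2]
        rw [show shift z (mix a e) = sh (EE e z) (mix (shift z a) e) from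
          funext fun w => mix_shift e a z w]
        rw [show shift z (mix b e) = sh (EE e z) (mix (shift z b) e) from
          funext fun w => mix_shift e b z w]
        rw [sh_assoc t (EE e z) (mix (shift z a) e) (mix b e)]
        rw [sh_comm t (mix a e) (sh (EE e z) (mix (shift z b) e))]
        rw [sh_assoc t (EE e z) (mix (shift z b) e) (mix a e)]
        rw [show sh (mix (shift z b) e) (mix a e) = fun w => sh (mix a e) (mix (shift z b) e) w
          from funext fun w => sh_comm w (mix (shift z b) e) (mix a e)]

lemma mix_sh (a b : Series (Fin (m+1))) :
    mix (sh a b) e = sh (mix a e) (mix b e) :=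
  funext fun η => mix_sh_aux e η.length η le_rfl a b

lemma mix_one : mix one e = (one : Series (Fin (m+1))) := by
  funext η
  show (∑ k ∈ Finset.range (η.length + 1), ∑ v : List.Vector (Fin (m + 1)) k,
      one v.toList * phiWord e v.toList one η) = one η
  rw [Finset.sum_eq_single 0]
  · have h1 : ∀ v : List.Vector (Fin (m+1)) 0,
        one v.toList * phiWord e v.toList one η = one η := by
      intro v
      rw [List.eq_nil_of_length_eq_zero v.toList_length]
      show one [] * one η = one η
      simp [one]
    rw [Finset.sum_congr rfl (fun v _ => h1 v), Finset.sum_const, Finset.card_univ,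
      Fintype.card_eq_one_iff.mpr ⟨List.Vector.nil, fun v => v.eq_nil⟩, one_smul]
  · intro k _ hk
    refine Finset.sum_eq_zero fun v _ => ?_
    have : (one : Series (Fin (m+1))) v.toList = 0 := by
      have hv : v.toList.length = k := v.toList_length
      simp only [one, ite_eq_right_iff]
      intro h; rw [h] at hv; simp at hv; omega
    rw [this, zero_mul]
  · intro h; simp at h

lemma mix_shpow (a : Series (Fin (m+1))) :
    ∀ k : ℕ, mix (shpow a k) e = shpow (mix a e) k
  | 0 => mix_one e
  | k + 1 => by
      show mix (sh a (shpow a k)) e = sh (mix a e) (shpow (mix a e) k)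
      rw [mix_sh, mix_shpow a k]

lemma mix_foldr {q : ℕ} (c : Fin q → Series (Fin (m+1))) (n : Fin q →₀ ℕ) :
    ∀ L : List (Fin q),
      mix (L.foldr (fun i acc => sh (shpow (c i) (n i)) acc) one) e
        = L.foldr (fun i acc => sh (shpow (mix (c i) e) (n i)) acc) one
  | [] => mix_one e
  | i :: L => by
      show mix (sh (shpow (c i) (n i))
        (L.foldr (fun i acc => sh (shpow (c i) (n i)) acc) one)) e = _
      rw [mix_sh, mix_shpow, mix_foldr c n L]
      rfl



end MixLemmas

section VanLemmas
variable {X : Type*} [DecidableEq X]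

lemma foldr_van {q : ℕ} (c : Fin q → Series X) (hc : ∀ i, c i [] = 0) (n : Fin q →₀ ℕ)
    (j : Fin q) :
    ∀ L : List (Fin q), j ∈ L → ∀ w : List X, w.length < n j →
      (L.foldr (fun i acc => sh (shpow (c i) (n i)) acc) one) w = 0
  | i :: L, hj, w, hw => by
      show sh (shpow (c i) (n i)) (L.foldr (fun i acc => sh (shpow (c i) (n i)) acc) one) w = 0
      by_cases h : i = j
      · subst h
        exact sh_van w (n i) 0 _ _ (fun u hu => shpow_van (c i) (hc i) (n i) u hu)
          (fun u hu => absurd hu (by omega)) (by omega)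
      · have hj' : j ∈ L := by
          rcases List.mem_cons.mp hj with h' | h'
          · exact absurd h'.symm h
          · exact h'
        exact sh_van w 0 (n j) _ _ (fun u hu => absurd hu (by omega))
          (fun u hu => foldr_van c hc n j L hj' u hu) (by omega)

lemma shFam_van {q : ℕ} (c : Fin q → Series X) (hc : ∀ i, c i [] = 0) (n : Fin q →₀ ℕ)
    (j : Fin q) (w : List X) (hw : w.length < n j) : shFam c n w = 0 :=
  foldr_van c hc n j (List.finRange q) (List.mem_finRange j) w hw

lemma mix_shFam {m q : ℕ} (e : Fin m → Series (Fin (m+1))) (c : Fin q → Series (Fin (m+1)))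
    (n : Fin q →₀ ℕ) :
    mix (shFam c n) e = shFam (fun j => mix (c j) e) n :=
  mix_foldr e c n (List.finRange q)


end VanLemmas

end AuxLemmas


/-- Mixed associativity of the Wiener-Fliess composition product and the
multiplicative mixed composition product: `d ∘̂ (c ∘̄ δ_e) = (d ∘̂ c) ∘̄ δ_e`. -/
theorem wf_mix_assoc (p q m : ℕ) (d : Fin p → MvPowerSeries (Fin q) ℝ)
    (c : Fin q → Series (Fin (m + 1))) (hc : ∀ i, c i [] = 0)
    (e : Fin m → Series (Fin (m + 1))) :
    ∀ i : Fin p, wf (d i) (fun j => mix (c j) e) = mix (wf (d i) c) e := by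
  intro i
  funext η
  set N : Fin q →₀ ℕ := Finsupp.equivFunOnFinite.symm fun _ : Fin q => η.length with hN
  have hNj : ∀ j, N j = η.length := fun j => rfl
  have hL : wf (d i) (fun j => mix (c j) e) η
      = ∑ n ∈ Finset.Iic N, MvPowerSeries.coeff n (d i) * mix (shFam c n) e η := by
    refine Finset.sum_congr rfl fun n _ => ?_
    rw [mix_shFam]
  rw [hL]
  have hR : mix (wf (d i) c) e η = ∑ k ∈ Finset.range (η.length + 1),
      ∑ v : List.Vector (Fin (m + 1)) k,
        (∑ n ∈ Finset.Iic N, MvPowerSeries.coeff n (d i) * shFam c n v.toList)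
          * phiWord e v.toList one η := by
    refine Finset.sum_congr rfl fun k hk => Finset.sum_congr rfl fun v _ => ?_
    congr 1
    show (∑ n ∈ Finset.Iic (Finsupp.equivFunOnFinite.symm fun _ : Fin q => v.toList.length),
      MvPowerSeries.coeff n (d i) * shFam c n v.toList) = _
    refine Finset.sum_subset ?_ ?_
    · apply Finset.Iic_subset_Iic.mpr
      rw [Finsupp.le_def]
      intro j
      show v.toList.length ≤ N j
      rw [hNj, v.toList_length]
      simp at hk; omega
    · intro n _ hn
      obtain ⟨j, hj⟩ : ∃ j, v.toList.length < n j := by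
        by_contra hcon
        push_neg at hcon
        refine hn (Finset.mem_Iic.mpr ?_)
        rw [Finsupp.le_def]
        intro j
        exact hcon j
      rw [shFam_van c hc n j v.toList hj, mul_zero]
  rw [hR]
  calc (∑ n ∈ Finset.Iic N, MvPowerSeries.coeff n (d i) * mix (shFam c n) e η)
      = ∑ n ∈ Finset.Iic N, ∑ k ∈ Finset.range (η.length + 1),
          ∑ v : List.Vector (Fin (m + 1)) k,
            MvPowerSeries.coeff n (d i) * (shFam c n v.toList * phiWord e v.toList one η) := by
        refine Finset.sum_congr rfl fun n _ => ?_
        show MvPowerSeries.coeff n (d i) * (∑ k ∈ Finset.range (η.length + 1),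
          ∑ v : List.Vector (Fin (m + 1)) k, shFam c n v.toList * phiWord e v.toList one η) = _
        rw [Finset.mul_sum]
        exact Finset.sum_congr rfl fun k _ => Finset.mul_sum _ _ _
    _ = ∑ k ∈ Finset.range (η.length + 1), ∑ n ∈ Finset.Iic N,
          ∑ v : List.Vector (Fin (m + 1)) k,
            MvPowerSeries.coeff n (d i) * (shFam c n v.toList * phiWord e v.toList one η) :=
        Finset.sum_comm
    _ = ∑ k ∈ Finset.range (η.length + 1), ∑ v : List.Vector (Fin (m + 1)) k,
          ∑ n ∈ Finset.Iic N,
            MvPowerSeries.coeff n (d i) * (shFam c n v.toList * phiWord e v.toList one η) :=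
        Finset.sum_congr rfl fun k _ => Finset.sum_comm
    _ = ∑ k ∈ Finset.range (η.length + 1), ∑ v : List.Vector (Fin (m + 1)) k,
          (∑ n ∈ Finset.Iic N, MvPowerSeries.coeff n (d i) * shFam c n v.toList)
            * phiWord e v.toList one η := by
        refine Finset.sum_congr rfl fun k _ => Finset.sum_congr rfl fun v _ => ?_
        rw [Finset.sum_mul]
        exact Finset.sum_congr rfl fun n _ => (mul_assoc _ _ _).symm

end FPS
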